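/- Let X = (x_0·F_{d−1} + F_d = 0) ⊂ P^n be a monoid of degree d, i.e. an irreducible reduced hypersurface with a point of multiplicity d−1, where F_{d−1}, F_d are homogeneous of degrees d−1, d in x_1,…,x_n. Then the rational map φ: P^n ⇢ P^n given by the linear system {F_{d−1}·x_1, …, F_{d−1}·x_n, x_0·F_{d−1}+F_d} is birational and maps X to the hyperplane (x_n+1-st coordinate = 0). Hence every monoid is Cremona equivalent to a hyperplane. -/

import Mathlib

open MvPolynomial

/-!
STATEMENT 3.  Let X = (x₀·F_{d-1} + F_d = 0) ⊂ ℙⁿ be a monoid of degree d, with F_{d-1},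
F_d homogeneous of degrees d-1, d in x₁,…,xₙ.  The rational map φ : ℙⁿ ⇢ ℙⁿ given by the
linear system (F_{d-1}x₁, …, F_{d-1}xₙ, x₀F_{d-1}+F_d) is birational (i.e. admits a
rational inverse: there are polynomials g₀,…,gₙ and a nonzero h with gᵢ∘φ = h·xᵢ), and it
maps X into (hence, being birational, onto) the hyperplane given by vanishing of the last
coordinate.
-/

/-- The components of the Cremona map associated to the monoid:
`F_{d-1}·x₁, …, F_{d-1}·xₙ, x₀·F_{d-1}+F_d`. -/
noncomputable def monoidMap (n : ℕ) (F1 F2 : MvPolynomial (Fin (n + 1)) ℂ) :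
    Fin (n + 1) → MvPolynomial (Fin (n + 1)) ℂ :=
  fun i => if h : (i : ℕ) < n then F1 * X ⟨(i : ℕ) + 1, by omega⟩ else X 0 * F1 + F2

/-- Substituting `xᵢ ↦ c·xᵢ` (for `i ≠ 0`) into a homogeneous polynomial of degree `m`
not involving `x₀` multiplies it by `c^m`. -/
lemma aeval_scale (n m : ℕ) (c p : MvPolynomial (Fin (n + 1)) ℂ)
    (hp : p.IsHomogeneous m) (h0 : degreeOf 0 p = 0) :
    aeval (fun i : Fin (n + 1) => if (i : ℕ) = 0 then 0 else c * X i) p = c ^ m * p := by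
  conv_lhs => rw [p.as_sum]
  conv_rhs => rw [p.as_sum]
  rw [map_sum, Finset.mul_sum]
  apply Finset.sum_congr rfl
  intro s hs
  have hs0 : s 0 = 0 := by
    have h1 : s 0 ≤ degreeOf 0 p := by
      rw [degreeOf_eq_sup]
      exact Finset.le_sup (f := fun s => s 0) hs
    omega
  have hdeg : s.degree = m := by
    rw [Finsupp.degree_eq_weight_one]
    exact hp (mem_support_iff.mp hs)
  rw [aeval_monomial, monomial_eq]
  have hprod : (s.prod fun i k =>
      (if ((i : Fin (n+1)) : ℕ) = 0 then (0 : MvPolynomial (Fin (n+1)) ℂ) else c * X i) ^ k)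
      = c ^ m * s.prod fun i k => X i ^ k := by
    rw [Finsupp.prod, Finsupp.prod]
    have key : ∀ i ∈ s.support,
        (if ((i : Fin (n+1)) : ℕ) = 0 then (0 : MvPolynomial (Fin (n+1)) ℂ) else c * X i) ^ (s i)
        = c ^ (s i) * X i ^ (s i) := by
      intro i hi
      have hi0 : (i : ℕ) ≠ 0 := by
        intro h
        have : i = 0 := Fin.ext h
        subst this
        exact (Finsupp.mem_support_iff.mp hi) hs0
      rw [if_neg hi0, mul_pow]
    rw [Finset.prod_congr rfl key, Finset.prod_mul_distrib,
      Finset.prod_pow_eq_pow_sum]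
    have : ∑ i ∈ s.support, s i = m := by
      rw [← hdeg]; rfl
    rw [this]
  rw [hprod]
  simp only [algebraMap_eq]
  ring

theorem monoid_map_birational_onto_hyperplane (n d : ℕ) (hn : 1 ≤ n) (hd : 2 ≤ d)
    (F1 F2 : MvPolynomial (Fin (n + 1)) ℂ)
    (h1 : F1.IsHomogeneous (d - 1)) (h2 : F2.IsHomogeneous d)
    (h1x : degreeOf 0 F1 = 0) (h2x : degreeOf 0 F2 = 0)
    (h1ne : F1 ≠ 0)
    (hirr : Irreducible (X 0 * F1 + F2)) :
    (∃ (g : Fin (n + 1) → MvPolynomial (Fin (n + 1)) ℂ)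
        (h : MvPolynomial (Fin (n + 1)) ℂ), h ≠ 0 ∧
        ∀ i, aeval (monoidMap n F1 F2) (g i) = h * X i) ∧
    (∀ x : Fin (n + 1) → ℂ, eval x (X 0 * F1 + F2) = 0 →
        eval x (monoidMap n F1 F2 (Fin.last n)) = 0) := by
  set φ := monoidMap n F1 F2 with hφ
  -- the "inverse substitution"
  set σ : Fin (n + 1) → MvPolynomial (Fin (n + 1)) ℂ :=
    fun i => if h : (i : ℕ) = 0 then 0 else X ⟨(i : ℕ) - 1, by omega⟩ with hσ
  have hcomp : (fun i => aeval φ (σ i))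
      = fun i : Fin (n+1) => if (i : ℕ) = 0 then 0 else F1 * X i := by
    funext i
    by_cases hi : (i : ℕ) = 0
    · have hi' : i = 0 := Fin.ext hi
      simp [hσ, hi']
    · have hlt : (i : ℕ) - 1 < n := by omega
      have : φ ⟨(i : ℕ) - 1, by omega⟩ = F1 * X ⟨(i : ℕ) - 1 + 1, by omega⟩ := by
        simp [hφ, monoidMap, hlt]
      have hX : (X ⟨(i : ℕ) - 1 + 1, by omega⟩ : MvPolynomial (Fin (n+1)) ℂ) = X i := by
        congr 1
        exact Fin.ext (by simp; omega)
      simp only [hσ]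
      rw [dif_neg hi, if_neg hi, aeval_X, this, hX]
  have key1 : aeval φ (aeval σ F1) = F1 ^ d := by
    rw [aeval_eq_bind₁ σ, aeval_bind₁, hcomp,
      aeval_scale n (d - 1) F1 F1 h1 h1x, ← pow_succ]
    congr 1
    omega
  have key2 : aeval φ (aeval σ F2) = F1 ^ d * F2 := by
    rw [aeval_eq_bind₁ σ, aeval_bind₁, hcomp, aeval_scale n d F1 F2 h2 h2x]
  have hlast : φ (Fin.last n) = X 0 * F1 + F2 := by
    simp [hφ, monoidMap]
  constructor
  · refine ⟨fun i => if (i : ℕ) = 0 then X (Fin.last n) * aeval σ F1 - aeval σ F2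
        else X ⟨(i : ℕ) - 1, by omega⟩ * aeval σ F1,
      F1 ^ (d + 1), pow_ne_zero _ h1ne, ?_⟩
    intro i
    by_cases hi : (i : ℕ) = 0
    · have hi' : i = 0 := Fin.ext hi
      subst hi'
      simp only [if_pos, Fin.val_zero, map_sub, map_mul, aeval_X, key1, key2, hlast]
      ring
    · have hlt : (i : ℕ) - 1 < n := by omega
      have hφi : φ ⟨(i : ℕ) - 1, by omega⟩ = F1 * X ⟨(i : ℕ) - 1 + 1, by omega⟩ := by
        simp [hφ, monoidMap, hlt]
      have hX : (X ⟨(i : ℕ) - 1 + 1, by omega⟩ : MvPolynomial (Fin (n+1)) ℂ) = X i := by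
        congr 1
        exact Fin.ext (by simp; omega)
      simp only [if_neg hi, map_mul, aeval_X, key1, hφi, hX]
      ring
  · intro x hx
    rw [hlast] at *
    exact hx
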